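/- For every i ∈ {1,…,n}, the expected total number of tasks of client i under π_{m−1} satisfies E_{π_{m−1}}[x^c_i + x^d_i + x^u_i] = β_{i,1} + γ_i · Z(m−2)/Z(m−1), where β_{i,1} = Σ_{k=1}^{m−1} (p_i/μ^c_i)^k · Z(m−1−k)/Z(m−1) and γ_i = p_i (1/μ^d_i + 1/μ^u_i). In particular E_{π_{m−1}}[x^c_i] = β_{i,1}, E_{π_{m−1}}[x^d_i] = (p_i/μ^d_i) · Z(m−2)/Z(m−1), and E_{π_{m−1}}[x^u_i] = (p_i/μ^u_i) · Z(m−2)/Z(m−1). -/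

import Mathlib

open scoped BigOperators

/-- A state of the closed queueing network: numbers of tasks at each client's
downlink (`d`), computation (`c`), and uplink (`u`) servers. -/
structure St (n : ℕ) where
  d : Fin n → ℕ
  c : Fin n → ℕ
  u : Fin n → ℕ

namespace St

variable {n : ℕ}

/-- Total number of tasks in a state. -/
def total (x : St n) : ℕ := ∑ i, (x.d i + x.c i + x.u i)

/-- Product-form weight of a state. -/
noncomputable def w (p μc μd μu : Fin n → ℝ) (x : St n) : ℝ :=
  ∏ i,
    (p i / μc i) ^ x.c i *
      ((p i / μd i) ^ x.d i / (Nat.factorial (x.d i) : ℝ)) *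
      ((p i / μu i) ^ x.u i / (Nat.factorial (x.u i) : ℝ))

/-- Normalizing constant `Z(k)` (it vanishes for `k < 0`). -/
noncomputable def Z (p μc μd μu : Fin n → ℝ) (k : ℤ) : ℝ :=
  ∑' x : St n, if (total x : ℤ) = k then w p μc μd μu x else 0

/-- Product-form distribution `π_k`. -/
noncomputable def pd (p μc μd μu : Fin n → ℝ) (k : ℤ) (x : St n) : ℝ :=
  w p μc μd μu x / Z p μc μd μu k

/-- Expectation of `f` under the product-form distribution `π_k`. -/
noncomputable def Epi (p μc μd μu : Fin n → ℝ) (k : ℤ) (f : St n → ℝ) : ℝ :=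
  ∑' x : St n, if (total x : ℤ) = k then f x * pd p μc μd μu k x else 0

end St

open St



namespace StAux

variable {n : ℕ}

lemma c_le_total (x : St n) (j : Fin n) : x.c j ≤ x.total := by
  have h := Finset.single_le_sum (f := fun j => x.d j + x.c j + x.u j)
    (fun _ _ => Nat.zero_le _) (Finset.mem_univ j)
  exact le_trans (by omega) h

lemma d_le_total (x : St n) (j : Fin n) : x.d j ≤ x.total := by
  have h := Finset.single_le_sum (f := fun j => x.d j + x.c j + x.u j)
    (fun _ _ => Nat.zero_le _) (Finset.mem_univ j)
  exact le_trans (by omega) h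

lemma u_le_total (x : St n) (j : Fin n) : x.u j ≤ x.total := by
  have h := Finset.single_le_sum (f := fun j => x.d j + x.c j + x.u j)
    (fun _ _ => Nat.zero_le _) (Finset.mem_univ j)
  exact le_trans (by omega) h

lemma finite_level (n N : ℕ) : {x : St n | x.total = N}.Finite := by
  classical
  have hS : ({f : Fin n → ℕ | ∀ j, f j ≤ N}).Finite := by
    have h := Set.Finite.pi (fun _ : Fin n => Set.finite_Iic N)
    apply h.subset
    intro f hf
    intro j _
    exact hf j
  have hinj : Function.Injective (fun x : St n => (x.d, x.c, x.u)) := by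
    intro x y h; cases x; cases y; simpa using h
  apply Set.Finite.subset (Set.Finite.preimage hinj.injOn (hS.prod (hS.prod hS)))
  intro x hx
  simp only [Set.mem_setOf_eq] at hx
  simp only [Set.mem_preimage, Set.mem_prod, Set.mem_setOf_eq]
  exact ⟨fun j => hx ▸ d_le_total x j, fun j => hx ▸ c_le_total x j,
         fun j => hx ▸ u_le_total x j⟩

lemma summable_level (N : ℤ) (g : St n → ℝ) :
    Summable (fun x : St n => if (x.total : ℤ) = N then g x else 0) := by
  rcases lt_or_ge N 0 with h | h
  · have he : (fun x : St n => if (x.total : ℤ) = N then g x else 0) = fun _ => 0 := by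
      funext x
      rw [if_neg (by omega)]
    rw [he]; exact summable_zero
  · obtain ⟨M, rfl⟩ := Int.eq_ofNat_of_zero_le h
    apply summable_of_ne_finset_zero (s := (finite_level n M).toFinset)
    intro x hx
    rw [Set.Finite.mem_toFinset] at hx
    simp only [Set.mem_setOf_eq] at hx
    rw [if_neg (by exact_mod_cast hx)]

end StAux

namespace StAux

variable {n : ℕ}

def bumpC (i : Fin n) (k : ℕ) (x : St n) : St n :=
  ⟨x.d, Function.update x.c i (x.c i + k), x.u⟩

def bumpD (i : Fin n) (x : St n) : St n :=
  ⟨Function.update x.d i (x.d i + 1), x.c, x.u⟩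

def bumpU (i : Fin n) (x : St n) : St n :=
  ⟨x.d, x.c, Function.update x.u i (x.u i + 1)⟩

lemma update_add_inj {f g : Fin n → ℕ} {i : Fin n} {k : ℕ}
    (h : Function.update f i (f i + k) = Function.update g i (g i + k)) : f = g := by
  funext j
  have hj := congrFun h j
  rcases eq_or_ne j i with rfl | hj'
  · simp only [Function.update_self] at hj; omega
  · simpa [Function.update_of_ne hj'] using hj

lemma bumpC_inj (i : Fin n) (k : ℕ) : Function.Injective (bumpC i k) := by
  intro x y h
  cases x; cases y
  simp only [bumpC, St.mk.injEq] at h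
  simp only [St.mk.injEq]
  exact ⟨h.1, update_add_inj h.2.1, h.2.2⟩

lemma bumpD_inj (i : Fin n) : Function.Injective (bumpD i) := by
  intro x y h
  cases x; cases y
  simp only [bumpD, St.mk.injEq] at h
  simp only [St.mk.injEq]
  exact ⟨update_add_inj (k := 1) h.1, h.2.1, h.2.2⟩

lemma bumpU_inj (i : Fin n) : Function.Injective (bumpU i) := by
  intro x y h
  cases x; cases y
  simp only [bumpU, St.mk.injEq] at h
  simp only [St.mk.injEq]
  exact ⟨h.1, h.2.1, update_add_inj (k := 1) h.2.2⟩

lemma update_sub_add {f : Fin n → ℕ} {i : Fin n} {k : ℕ} (h : k ≤ f i) :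
    Function.update (Function.update f i (f i - k)) i
      (Function.update f i (f i - k) i + k) = f := by
  funext j
  rcases eq_or_ne j i with rfl | hj
  · simp only [Function.update_self]; omega
  · simp [Function.update_of_ne hj]

lemma mem_range_bumpC {i : Fin n} {k : ℕ} {y : St n} (h : k ≤ y.c i) :
    y ∈ Set.range (bumpC i k) := by
  refine ⟨⟨y.d, Function.update y.c i (y.c i - k), y.u⟩, ?_⟩
  cases y with
  | mk d c u =>
    simp only at h
    simp [bumpC, update_sub_add (f := c) (i := i) (k := k) h]; omega

lemma mem_range_bumpD {i : Fin n} {y : St n} (h : 1 ≤ y.d i) :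
    y ∈ Set.range (bumpD i) := by
  refine ⟨⟨Function.update y.d i (y.d i - 1), y.c, y.u⟩, ?_⟩
  cases y with
  | mk d c u =>
    simp only at h
    simp [bumpD, update_sub_add (f := d) (i := i) (k := 1) h]; omega

lemma mem_range_bumpU {i : Fin n} {y : St n} (h : 1 ≤ y.u i) :
    y ∈ Set.range (bumpU i) := by
  refine ⟨⟨y.d, y.c, Function.update y.u i (y.u i - 1)⟩, ?_⟩
  cases y with
  | mk d c u =>
    simp only at h
    simp [bumpU, update_sub_add (f := u) (i := i) (k := 1) h]; omega

lemma sum_update_add (f : Fin n → ℕ) (i : Fin n) (k : ℕ) :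
    ∑ j, Function.update f i (f i + k) j = (∑ j, f j) + k := by
  classical
  rw [Finset.sum_update_of_mem (Finset.mem_univ i),
    Finset.sum_eq_sum_sdiff_singleton_add (Finset.mem_univ i) f]
  omega

lemma total_split (x : St n) :
    x.total = (∑ j, x.d j) + (∑ j, x.c j) + (∑ j, x.u j) := by
  unfold St.total
  rw [Finset.sum_add_distrib, Finset.sum_add_distrib]

lemma total_bumpC (i : Fin n) (k : ℕ) (x : St n) :
    (bumpC i k x).total = x.total + k := by
  rw [total_split, total_split]
  have h := sum_update_add x.c i k
  simp only [bumpC] at *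
  omega

lemma total_bumpD (i : Fin n) (x : St n) :
    (bumpD i x).total = x.total + 1 := by
  rw [total_split, total_split]
  have h := sum_update_add x.d i 1
  simp only [bumpD] at *
  omega

lemma total_bumpU (i : Fin n) (x : St n) :
    (bumpU i x).total = x.total + 1 := by
  rw [total_split, total_split]
  have h := sum_update_add x.u i 1
  simp only [bumpU] at *
  omega

lemma prod_eq_of_update (F G : Fin n → ℝ) (i : Fin n) (c : ℝ)
    (h : ∀ j ≠ i, F j = G j) (hi : F i = c * G i) :
    ∏ j, F j = c * ∏ j, G j := by
  classical
  have hF : F = Function.update G i (c * G i) := by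
    funext j
    rcases eq_or_ne j i with rfl | hj
    · simp [hi]
    · simp [Function.update_of_ne hj, h j hj]
  rw [hF, Finset.prod_update_of_mem (Finset.mem_univ i),
    Finset.prod_eq_prod_sdiff_singleton_mul (Finset.mem_univ i) G]
  ring

variable (p μc μd μu : Fin n → ℝ)

lemma w_bumpC (i : Fin n) (k : ℕ) (x : St n) :
    St.w p μc μd μu (bumpC i k x) = (p i / μc i) ^ k * St.w p μc μd μu x := by
  unfold St.w
  refine prod_eq_of_update _ _ i _ ?_ ?_
  · intro j hj
    simp [bumpC, Function.update_of_ne hj]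
  · simp only [bumpC, Function.update_self]
    rw [pow_add]
    ring

lemma w_bumpD (i : Fin n) (x : St n) :
    ((x.d i : ℝ) + 1) * St.w p μc μd μu (bumpD i x) = (p i / μd i) * St.w p μc μd μu x := by
  have h1 : ((x.d i : ℝ) + 1) ≠ 0 := by positivity
  have key : St.w p μc μd μu (bumpD i x)
      = ((p i / μd i) / ((x.d i : ℝ) + 1)) * St.w p μc μd μu x := by
    unfold St.w
    refine prod_eq_of_update _ _ i _ ?_ ?_
    · intro j hj
      simp [bumpD, Function.update_of_ne hj]
    · simp only [bumpD, Function.update_self]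
      have hmain : (p i / μd i) ^ (x.d i + 1) / (((x.d i : ℝ) + 1) * ((Nat.factorial (x.d i) : ℝ)))
          = ((p i / μd i) / ((x.d i : ℝ) + 1)) * ((p i / μd i) ^ (x.d i) / (Nat.factorial (x.d i) : ℝ)) := by
        rw [div_mul_div_comm, pow_succ]
        ring
      rw [Nat.factorial_succ, Nat.cast_mul, Nat.cast_add, Nat.cast_one, hmain]
      ring
  rw [key]
  have h2 : ((x.d i : ℝ) + 1) * ((p i / μd i) / ((x.d i : ℝ) + 1) * St.w p μc μd μu x)
      = (((x.d i : ℝ) + 1) / ((x.d i : ℝ) + 1)) * ((p i / μd i) * St.w p μc μd μu x) := by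
    ring
  rw [h2, div_self h1, one_mul]

lemma w_bumpU (i : Fin n) (x : St n) :
    ((x.u i : ℝ) + 1) * St.w p μc μd μu (bumpU i x) = (p i / μu i) * St.w p μc μd μu x := by
  have h1 : ((x.u i : ℝ) + 1) ≠ 0 := by positivity
  have key : St.w p μc μd μu (bumpU i x)
      = ((p i / μu i) / ((x.u i : ℝ) + 1)) * St.w p μc μd μu x := by
    unfold St.w
    refine prod_eq_of_update _ _ i _ ?_ ?_
    · intro j hj
      simp [bumpU, Function.update_of_ne hj]
    · simp only [bumpU, Function.update_self]
      have hmain : (p i / μu i) ^ (x.u i + 1) / (((x.u i : ℝ) + 1) * ((Nat.factorial (x.u i) : ℝ)))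
          = ((p i / μu i) / ((x.u i : ℝ) + 1)) * ((p i / μu i) ^ (x.u i) / (Nat.factorial (x.u i) : ℝ)) := by
        rw [div_mul_div_comm, pow_succ]
        ring
      rw [Nat.factorial_succ, Nat.cast_mul, Nat.cast_add, Nat.cast_one, hmain]
      ring
  rw [key]
  have h2 : ((x.u i : ℝ) + 1) * ((p i / μu i) / ((x.u i : ℝ) + 1) * St.w p μc μd μu x)
      = (((x.u i : ℝ) + 1) / ((x.u i : ℝ) + 1)) * ((p i / μu i) * St.w p μc μd μu x) := by
    ring
  rw [h2, div_self h1, one_mul]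

end StAux

namespace StAux

variable {n : ℕ} (p μc μd μu : Fin n → ℝ) (i : Fin n)

lemma key_d (N : ℤ) :
    (∑' x : St n, if (x.total : ℤ) = N then (x.d i : ℝ) * St.w p μc μd μu x else 0)
      = (p i / μd i) * St.Z p μc μd μu (N - 1) := by
  classical
  have hsupp : Function.support
      (fun y : St n => if (y.total : ℤ) = N then (y.d i : ℝ) * St.w p μc μd μu y else 0)
      ⊆ Set.range (bumpD i) := by
    intro y hy
    rcases Nat.eq_zero_or_pos (y.d i) with h0 | h0
    · exact absurd (by simp [h0]) hy
    · exact mem_range_bumpD h0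
  rw [← Function.Injective.tsum_eq (bumpD_inj i) hsupp]
  have hterm : ∀ x : St n,
      (if ((bumpD i x).total : ℤ) = N then ((bumpD i x).d i : ℝ) * St.w p μc μd μu (bumpD i x) else 0)
      = (p i / μd i) * (if (x.total : ℤ) = N - 1 then St.w p μc μd μu x else 0) := by
    intro x
    have ht : (bumpD i x).total = x.total + 1 := total_bumpD i x
    have hd : (bumpD i x).d i = x.d i + 1 := by simp [bumpD]
    by_cases hx : (x.total : ℤ) = N - 1
    · rw [if_pos (by rw [ht]; push_cast; omega), if_pos hx, hd]
      push_cast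
      exact w_bumpD p μc μd μu i x
    · rw [if_neg (by rw [ht]; push_cast; omega), if_neg hx, mul_zero]
  simp only [hterm]
  rw [tsum_mul_left]
  rfl

lemma key_u (N : ℤ) :
    (∑' x : St n, if (x.total : ℤ) = N then (x.u i : ℝ) * St.w p μc μd μu x else 0)
      = (p i / μu i) * St.Z p μc μd μu (N - 1) := by
  classical
  have hsupp : Function.support
      (fun y : St n => if (y.total : ℤ) = N then (y.u i : ℝ) * St.w p μc μd μu y else 0)
      ⊆ Set.range (bumpU i) := by
    intro y hy
    rcases Nat.eq_zero_or_pos (y.u i) with h0 | h0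
    · exact absurd (by simp [h0]) hy
    · exact mem_range_bumpU h0
  rw [← Function.Injective.tsum_eq (bumpU_inj i) hsupp]
  have hterm : ∀ x : St n,
      (if ((bumpU i x).total : ℤ) = N then ((bumpU i x).u i : ℝ) * St.w p μc μd μu (bumpU i x) else 0)
      = (p i / μu i) * (if (x.total : ℤ) = N - 1 then St.w p μc μd μu x else 0) := by
    intro x
    have ht : (bumpU i x).total = x.total + 1 := total_bumpU i x
    have hd : (bumpU i x).u i = x.u i + 1 := by simp [bumpU]
    by_cases hx : (x.total : ℤ) = N - 1
    · rw [if_pos (by rw [ht]; push_cast; omega), if_pos hx, hd]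
      push_cast
      exact w_bumpU p μc μd μu i x
    · rw [if_neg (by rw [ht]; push_cast; omega), if_neg hx, mul_zero]
  simp only [hterm]
  rw [tsum_mul_left]
  rfl

lemma key_c (N : ℕ) :
    (∑' x : St n, if (x.total : ℤ) = (N : ℤ) then (x.c i : ℝ) * St.w p μc μd μu x else 0)
      = ∑ k ∈ Finset.Icc 1 N, (p i / μc i) ^ k * St.Z p μc μd μu ((N : ℤ) - k) := by
  classical
  have step1 : ∀ k : ℕ, (p i / μc i) ^ k * St.Z p μc μd μu ((N : ℤ) - k)
      = ∑' y : St n, (if (y.total : ℤ) = (N : ℤ) then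
          (if k ≤ y.c i then St.w p μc μd μu y else 0) else 0) := by
    intro k
    have hsupp : Function.support
        (fun y : St n => if (y.total : ℤ) = (N : ℤ) then
          (if k ≤ y.c i then St.w p μc μd μu y else 0) else 0)
        ⊆ Set.range (bumpC i k) := by
      intro y hy
      rcases le_or_gt k (y.c i) with h0 | h0
      · exact mem_range_bumpC h0
      · exact absurd (by simp [not_le.mpr h0]) hy
    rw [← Function.Injective.tsum_eq (bumpC_inj i k) hsupp]
    have hterm : ∀ x : St n,
        (if ((bumpC i k x).total : ℤ) = (N : ℤ) then
          (if k ≤ (bumpC i k x).c i then St.w p μc μd μu (bumpC i k x) else 0) else 0)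
        = (p i / μc i) ^ k * (if (x.total : ℤ) = (N : ℤ) - k then St.w p μc μd μu x else 0) := by
      intro x
      have ht : (bumpC i k x).total = x.total + k := total_bumpC i k x
      have hc : (bumpC i k x).c i = x.c i + k := by simp [bumpC]
      by_cases hx : (x.total : ℤ) = (N : ℤ) - k
      · rw [if_pos (by rw [ht]; push_cast; omega), if_pos (by rw [hc]; omega), if_pos hx,
          w_bumpC]
      · rw [if_neg (by rw [ht]; push_cast; omega), if_neg hx, mul_zero]
    simp only [hterm]
    rw [tsum_mul_left]
    rfl
  rw [Finset.sum_congr rfl (fun k _ => step1 k),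
    ← Summable.tsum_finsetSum (fun k _ => summable_level ((N : ℤ)) _)]
  apply tsum_congr
  intro y
  by_cases hy : (y.total : ℤ) = (N : ℤ)
  · rw [if_pos hy]
    have hyN : y.total = N := by exact_mod_cast hy
    have hcN : y.c i ≤ N := hyN ▸ c_le_total y i
    calc (y.c i : ℝ) * St.w p μc μd μu y
        = ∑ k ∈ Finset.Icc 1 (y.c i), St.w p μc μd μu y := by
          rw [Finset.sum_const, Nat.card_Icc, Nat.add_sub_cancel, nsmul_eq_mul]
      _ = ∑ k ∈ Finset.Icc 1 N, (if k ≤ y.c i then St.w p μc μd μu y else 0) := by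
          rw [← Finset.sum_filter]
          congr 1
          ext k
          simp only [Finset.mem_filter, Finset.mem_Icc]
          omega
      _ = ∑ k ∈ Finset.Icc 1 N, (if (y.total : ℤ) = (N : ℤ) then
            (if k ≤ y.c i then St.w p μc μd μu y else 0) else 0) := by
          refine Finset.sum_congr rfl fun k _ => ?_
          rw [if_pos hy]
  · simp [hy]

lemma Epi_eq (k : ℤ) (f : St n → ℝ) :
    St.Epi p μc μd μu k f
      = (∑' x : St n, if (x.total : ℤ) = k then f x * St.w p μc μd μu x else 0)
        / St.Z p μc μd μu k := by
  rw [St.Epi, ← tsum_div_const]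
  apply tsum_congr
  intro x
  by_cases h : (x.total : ℤ) = k
  · simp [h, St.pd, mul_div_assoc]
  · simp [h]

end StAux

/-- Expected number of tasks of client `i` under `π_{m-1}`:
`E[x^c_i + x^d_i + x^u_i] = β_{i,1} + γ_i · Z(m-2)/Z(m-1)`, together with the separate
identities for each of the three components. -/
theorem stmt5 (n m : ℕ) (hn : 1 ≤ n) (hm : 1 ≤ m)
    (p μc μd μu : Fin n → ℝ)
    (hp : ∀ i, 0 < p i)
    (hμc : ∀ i, 0 < μc i) (hμd : ∀ i, 0 < μd i) (hμu : ∀ i, 0 < μu i)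
    (i : Fin n) :
    Epi p μc μd μu ((m : ℤ) - 1) (fun x => ((x.c i + x.d i + x.u i : ℕ) : ℝ)) =
        (∑ k ∈ Finset.Icc 1 (m - 1),
          (p i / μc i) ^ k * (Z p μc μd μu ((m : ℤ) - 1 - k) / Z p μc μd μu ((m : ℤ) - 1))) +
        (p i * (1 / μd i + 1 / μu i)) *
          (Z p μc μd μu ((m : ℤ) - 2) / Z p μc μd μu ((m : ℤ) - 1)) ∧
    Epi p μc μd μu ((m : ℤ) - 1) (fun x => (x.c i : ℝ)) =
        ∑ k ∈ Finset.Icc 1 (m - 1),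
          (p i / μc i) ^ k * (Z p μc μd μu ((m : ℤ) - 1 - k) / Z p μc μd μu ((m : ℤ) - 1)) ∧
    Epi p μc μd μu ((m : ℤ) - 1) (fun x => (x.d i : ℝ)) =
        (p i / μd i) * (Z p μc μd μu ((m : ℤ) - 2) / Z p μc μd μu ((m : ℤ) - 1)) ∧
    Epi p μc μd μu ((m : ℤ) - 1) (fun x => (x.u i : ℝ)) =
        (p i / μu i) * (Z p μc μd μu ((m : ℤ) - 2) / Z p μc μd μu ((m : ℤ) - 1)) := by
  classical
  have hm1 : ((m : ℤ) - 1) = ((m - 1 : ℕ) : ℤ) := by omega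
  have hm2 : ((m : ℤ) - 2) = ((m - 1 : ℕ) : ℤ) - 1 := by omega
  simp only [hm1, hm2]
  have hc := StAux.key_c p μc μd μu i (m - 1)
  have hd := StAux.key_d p μc μd μu i (((m - 1 : ℕ) : ℤ))
  have hu := StAux.key_u p μc μd μu i (((m - 1 : ℕ) : ℤ))
  have hβ : (∑ k ∈ Finset.Icc 1 (m - 1), (p i / μc i) ^ k *
        Z p μc μd μu (((m - 1 : ℕ) : ℤ) - k)) / Z p μc μd μu ((m - 1 : ℕ) : ℤ)
      = ∑ k ∈ Finset.Icc 1 (m - 1), (p i / μc i) ^ k *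
        (Z p μc μd μu (((m - 1 : ℕ) : ℤ) - k) / Z p μc μd μu ((m - 1 : ℕ) : ℤ)) := by
    rw [Finset.sum_div]
    exact Finset.sum_congr rfl fun k _ => mul_div_assoc _ _ _
  have Ec : Epi p μc μd μu ((m - 1 : ℕ) : ℤ) (fun x => (x.c i : ℝ))
      = ∑ k ∈ Finset.Icc 1 (m - 1), (p i / μc i) ^ k *
        (Z p μc μd μu (((m - 1 : ℕ) : ℤ) - k) / Z p μc μd μu ((m - 1 : ℕ) : ℤ)) := by
    rw [StAux.Epi_eq, hc, hβ]
  have Ed : Epi p μc μd μu ((m - 1 : ℕ) : ℤ) (fun x => (x.d i : ℝ))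
      = (p i / μd i) * (Z p μc μd μu (((m - 1 : ℕ) : ℤ) - 1) / Z p μc μd μu ((m - 1 : ℕ) : ℤ)) := by
    rw [StAux.Epi_eq, hd, mul_div_assoc]
  have Eu : Epi p μc μd μu ((m - 1 : ℕ) : ℤ) (fun x => (x.u i : ℝ))
      = (p i / μu i) * (Z p μc μd μu (((m - 1 : ℕ) : ℤ) - 1) / Z p μc μd μu ((m - 1 : ℕ) : ℤ)) := by
    rw [StAux.Epi_eq, hu, mul_div_assoc]
  have Elin : Epi p μc μd μu ((m - 1 : ℕ) : ℤ) (fun x => ((x.c i + x.d i + x.u i : ℕ) : ℝ))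
      = Epi p μc μd μu ((m - 1 : ℕ) : ℤ) (fun x => (x.c i : ℝ))
        + Epi p μc μd μu ((m - 1 : ℕ) : ℤ) (fun x => (x.d i : ℝ))
        + Epi p μc μd μu ((m - 1 : ℕ) : ℤ) (fun x => (x.u i : ℝ)) := by
    simp only [StAux.Epi_eq]
    rw [← add_div, ← add_div]
    congr 1
    rw [← Summable.tsum_add (StAux.summable_level _ _) (StAux.summable_level _ _),
      ← Summable.tsum_add (Summable.add (StAux.summable_level _ _) (StAux.summable_level _ _))
        (StAux.summable_level _ _)]
    apply tsum_congr
    intro x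
    by_cases hx : (x.total : ℤ) = ((m - 1 : ℕ) : ℤ)
    · simp only [if_pos hx]
      push_cast
      ring
    · simp [hx]
  refine ⟨?_, Ec, Ed, Eu⟩
  rw [Elin, Ec, Ed, Eu]
  ring
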